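/- The von Dyck group G₀(2,4,4), i.e. the presented group ⟨x, y, z ∣ x² = y⁴ = z⁴ = xyz = 1⟩ (the quotient of the free group on three generators x, y, z by the normal closure of the relators x², y⁴, z⁴, xyz), has Grossman's Property A. -/

import Mathlib

/-- A group `G` has Grossman's Property A if every class-preserving automorphism
(i.e. one sending each element to a conjugate of itself) is inner. -/
def HasPropertyA (G : Type*) [Group G] : Prop :=
  ∀ φ : G ≃* G, (∀ g : G, IsConj g (φ g)) → ∃ h : G, ∀ g : G, φ g = h * g * h⁻¹

/-- The relators of the von Dyck group `G₀(p,q,r) = ⟨x, y, z ∣ xᵖ = y^q = z^r = xyz = 1⟩`. -/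
def vonDyckRels (p q r : ℕ) : Set (FreeGroup (Fin 3)) :=
  {(FreeGroup.of 0) ^ p, (FreeGroup.of 1) ^ q, (FreeGroup.of 2) ^ r,
    FreeGroup.of 0 * FreeGroup.of 1 * FreeGroup.of 2}

open Multiplicative

noncomputable section VD

abbrev NN := Multiplicative (ℤ × ℤ)

def rotAux : ℤ × ℤ ≃+ ℤ × ℤ where
  toFun p := (-p.2, p.1)
  invFun p := (p.2, -p.1)
  left_inv p := by simp
  right_inv p := by simp
  map_add' p q := by simp [Prod.ext_iff]; ring

def rot : MulAut NN := AddEquiv.toMultiplicative rotAux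

lemma rot_apply (p : ℤ × ℤ) : rot (ofAdd p) = ofAdd (-p.2, p.1) := rfl

lemma rot_pow_four : rot ^ 4 = 1 := by
  ext n : 1
  show rot (rot (rot (rot n))) = n
  rcases n with ⟨a, b⟩
  show rot (rot (rot (rot (ofAdd (a,b))))) = ofAdd (a,b)
  rw [rot_apply, rot_apply, rot_apply, rot_apply]
  simp

/-- hom out of `Multiplicative (ZMod 4)` from an element of order dividing 4. -/
def zmod4Hom {M : Type*} [Group M] (g : M) (hg : g ^ 4 = 1) :
    Multiplicative (ZMod 4) →* M :=
  AddMonoidHom.toMultiplicativeLeft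
    (ZMod.lift 4 ⟨(zmultiplesHom (Additive M)) (Additive.ofMul g), by
      show ((4:ℤ) • Additive.ofMul g) = 0
      rw [← ofMul_zpow, ofMul_eq_zero]
      exact_mod_cast hg⟩)

lemma zmod4Hom_intCast {M : Type*} [Group M] (g : M) (hg : g ^ 4 = 1) (m : ℤ) :
    zmod4Hom g hg (ofAdd ((m : ℤ) : ZMod 4)) = g ^ m := by
  have : zmod4Hom g hg (ofAdd ((m : ℤ) : ZMod 4)) =
      Additive.toMul (ZMod.lift 4 ⟨(zmultiplesHom (Additive M)) (Additive.ofMul g), by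
        show ((4:ℤ) • Additive.ofMul g) = 0
        rw [← ofMul_zpow, ofMul_eq_zero]
        exact_mod_cast hg⟩ ((m : ℤ) : ZMod 4)) := rfl
  rw [this, ZMod.lift_coe]
  show Additive.toMul ((m:ℤ) • Additive.ofMul g) = g ^ m
  rw [← ofMul_zpow]
  rfl


def phiA : Multiplicative (ZMod 4) →* MulAut NN := zmod4Hom rot rot_pow_four

abbrev HH := SemidirectProduct NN (Multiplicative (ZMod 4)) phiA

def tH : HH := ⟨ofAdd (1, 0), 1⟩
def yH : HH := ⟨1, ofAdd 1⟩

lemma phiA_ofAdd_one : phiA (ofAdd (1 : ZMod 4)) = rot := by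
  have : ((1:ℤ) : ZMod 4) = 1 := by norm_num
  rw [show (ofAdd (1 : ZMod 4)) = ofAdd (((1:ℤ) : ZMod 4)) by rw [this]]
  rw [phiA, zmod4Hom_intCast]
  simp

-- conjugation of a translation
lemma conj_inl (u : NN) (s : Multiplicative (ZMod 4)) (n : NN) :
    (⟨u, s⟩ : HH) * ⟨n, 1⟩ * (⟨u, s⟩ : HH)⁻¹ = ⟨phiA s n, 1⟩ := by
  ext : 1
  · show (u * phiA s n) * phiA (s * 1) (phiA s⁻¹ (u⁻¹)) = phiA s n
    rw [mul_one, ← MulAut.mul_apply, ← map_mul, mul_inv_cancel]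
    simp [mul_comm]
  · show s * 1 * s⁻¹ = 1
    simp

-- conjugation of ⟨1, γ⟩
lemma conj_inr (u : NN) (s γ : Multiplicative (ZMod 4)) :
    (⟨u, s⟩ : HH) * ⟨1, γ⟩ * (⟨u, s⟩ : HH)⁻¹ = ⟨u * (phiA γ u)⁻¹, γ⟩ := by
  ext : 1
  · show (u * phiA s 1) * phiA (s * γ) (phiA s⁻¹ (u⁻¹)) = u * (phiA γ u)⁻¹
    rw [map_one, mul_one, ← MulAut.mul_apply, ← map_mul]
    rw [show s * γ * s⁻¹ = γ by rw [mul_comm s γ]; simp]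
    simp
  · show s * γ * s⁻¹ = γ
    rw [mul_comm s γ]; simp

open SemidirectProduct in
lemma closure_tH_yH : Subgroup.closure ({tH, yH} : Set HH) = ⊤ := by
  rw [eq_top_iff]
  intro g _
  have htH : tH ∈ Subgroup.closure ({tH, yH} : Set HH) :=
    Subgroup.subset_closure (by simp)
  have hyH : yH ∈ Subgroup.closure ({tH, yH} : Set HH) :=
    Subgroup.subset_closure (by simp)
  have ht2 : yH * tH * yH⁻¹ ∈ Subgroup.closure ({tH, yH} : Set HH) :=
    Subgroup.mul_mem _ (Subgroup.mul_mem _ hyH htH) (Subgroup.inv_mem _ hyH)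
  have h1 : tH = inl (ofAdd ((1:ℤ), (0:ℤ))) := by ext <;> rfl
  have h2 : yH * tH * yH⁻¹ = inl (ofAdd ((0:ℤ), (1:ℤ))) := by
    have : yH * tH * yH⁻¹ = (⟨1, ofAdd 1⟩ : HH) * ⟨ofAdd (1,0), 1⟩ * (⟨1, ofAdd 1⟩ : HH)⁻¹ := rfl
    rw [this, conj_inl]
    ext : 1
    · show phiA (ofAdd 1) (ofAdd (1,0)) = ofAdd ((0:ℤ), (1:ℤ))
      rw [phiA_ofAdd_one, rot_apply]
      norm_num
    · rfl
  have hinl : ∀ n : NN, inl n ∈ Subgroup.closure ({tH, yH} : Set HH) := by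
    intro n
    have hn : n = (ofAdd ((1:ℤ),(0:ℤ))) ^ (toAdd n).1 * (ofAdd ((0:ℤ),(1:ℤ))) ^ (toAdd n).2 := by
      rcases n with ⟨a, b⟩
      show ofAdd (a, b) = _
      rw [← ofAdd_zsmul, ← ofAdd_zsmul, ← ofAdd_add]
      show _ = ofAdd ((toAdd (a,b)).1 • ((1:ℤ),(0:ℤ)) + (toAdd (a,b)).2 • ((0:ℤ),(1:ℤ)))
      congr 1
      simp [Prod.ext_iff]
      exact ⟨rfl, rfl⟩
    rw [hn, map_mul, map_zpow, map_zpow, ← h1, ← h2]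
    exact Subgroup.mul_mem _ (Subgroup.zpow_mem _ htH _) (Subgroup.zpow_mem _ ht2 _)
  have hinr : ∀ σ : Multiplicative (ZMod 4), inr σ ∈ Subgroup.closure ({tH, yH} : Set HH) := by
    intro σ
    have hσ : σ = (ofAdd (1 : ZMod 4)) ^ (toAdd σ).val := by
      rw [← ofAdd_nsmul]
      congr 1
      simp [ZMod.natCast_val, ZMod.cast_id]
    rw [hσ, map_pow]
    have : inr (φ := phiA) (ofAdd (1 : ZMod 4)) = yH := by ext <;> rfl
    rw [this]
    exact Subgroup.pow_mem _ hyH _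
  have := SemidirectProduct.inl_left_mul_inr_right (φ := phiA) g
  rw [← this]
  exact Subgroup.mul_mem _ (hinl _) (hinr _)


theorem hasPropertyA_HH : HasPropertyA HH := by
  intro φ hφ
  obtain ⟨c1u, hc1⟩ := hφ tH
  obtain ⟨c2u, hc2⟩ := hφ yH
  set c1 : HH := ↑c1u with hc1d
  set c2 : HH := ↑c2u with hc2d
  have hc1' : c1 * tH = φ tH * c1 := hc1
  have hc2' : c2 * yH = φ yH * c2 := hc2
  refine ⟨⟨c2.left, c1.right⟩, ?_⟩
  set h : HH := ⟨c2.left, c1.right⟩ with hh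
  have e1 : φ tH = h * tH * h⁻¹ := by
    have h1 : φ tH = c1 * tH * c1⁻¹ := eq_mul_inv_iff_mul_eq.2 hc1'.symm
    have h2 : c1 * tH * c1⁻¹ = (⟨c1.left, c1.right⟩ : HH) * ⟨ofAdd ((1:ℤ),(0:ℤ)), 1⟩ *
        (⟨c1.left, c1.right⟩ : HH)⁻¹ := rfl
    have h3 : h * tH * h⁻¹ = (⟨c2.left, c1.right⟩ : HH) * ⟨ofAdd ((1:ℤ),(0:ℤ)), 1⟩ *
        (⟨c2.left, c1.right⟩ : HH)⁻¹ := rfl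
    rw [h1, h2, h3, conj_inl, conj_inl]
  have e2 : φ yH = h * yH * h⁻¹ := by
    have h1 : φ yH = c2 * yH * c2⁻¹ := eq_mul_inv_iff_mul_eq.2 hc2'.symm
    have h2 : c2 * yH * c2⁻¹ = (⟨c2.left, c2.right⟩ : HH) * ⟨1, ofAdd 1⟩ *
        (⟨c2.left, c2.right⟩ : HH)⁻¹ := rfl
    have h3 : h * yH * h⁻¹ = (⟨c2.left, c1.right⟩ : HH) * ⟨1, ofAdd 1⟩ *
        (⟨c2.left, c1.right⟩ : HH)⁻¹ := rfl
    rw [h1, h2, h3, conj_inr, conj_inr]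
  intro g
  have heq : Set.EqOn (φ : HH →* HH) ((MulAut.conj h) : HH →* HH) ({tH, yH} : Set HH) := by
    rintro x (rfl | rfl)
    · simpa using e1
    · simpa using e2
  have := MonoidHom.eqOn_closure heq (closure_tH_yH ▸ Subgroup.mem_top g)
  simpa using this


abbrev PP := PresentedGroup (vonDyckRels 2 4 4)

def XX : PP := PresentedGroup.of 0
def YY : PP := PresentedGroup.of 1
def ZZ : PP := PresentedGroup.of 2

lemma rel_one {r : FreeGroup (Fin 3)} (hr : r ∈ vonDyckRels 2 4 4) :
    PresentedGroup.mk (vonDyckRels 2 4 4) r = 1 := by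
  have : r ∈ Subgroup.normalClosure (vonDyckRels 2 4 4) :=
    Subgroup.subset_normalClosure hr
  exact (QuotientGroup.eq_one_iff r).2 this

lemma hX2 : XX ^ 2 = 1 := by
  have := rel_one (show (FreeGroup.of 0)^2 ∈ vonDyckRels 2 4 4 by left; rfl)
  rwa [map_pow] at this

lemma hY4 : YY ^ 4 = 1 := by
  have := rel_one (show (FreeGroup.of 1)^4 ∈ vonDyckRels 2 4 4 by right; left; rfl)
  rwa [map_pow] at this

lemma hZ4 : ZZ ^ 4 = 1 := by
  have := rel_one (show (FreeGroup.of 2)^4 ∈ vonDyckRels 2 4 4 by right; right; left; rfl)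
  rwa [map_pow] at this

lemma hXYZ : XX * YY * ZZ = 1 := by
  have := rel_one (show FreeGroup.of 0 * FreeGroup.of 1 * FreeGroup.of 2 ∈ vonDyckRels 2 4 4 by
    right; right; right; rfl)
  rwa [map_mul, map_mul] at this

lemma hX_eq : XX = YY * ZZ := by
  have h1 : XX = (YY * ZZ)⁻¹ := by
    rw [eq_inv_iff_mul_eq_one, ← mul_assoc]; exact hXYZ
  have h2 : XX⁻¹ = XX := by
    rw [inv_eq_iff_mul_eq_one, ← pow_two]; exact hX2
  rw [← h2, h1, inv_inv]

lemma hYZY : YY * ZZ * YY = ZZ⁻¹ := by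
  have h : (YY * ZZ) * (YY * ZZ) = 1 := by
    rw [← hX_eq, ← pow_two]; exact hX2
  rw [eq_inv_iff_mul_eq_one]
  calc YY * ZZ * YY * ZZ = (YY * ZZ) * (YY * ZZ) := by group
    _ = 1 := h

def tP : PP := ZZ * YY⁻¹
def tP' : PP := YY * ZZ * YY⁻¹ * YY⁻¹

lemma hYtY : YY * tP * YY⁻¹ = tP' := by rw [tP, tP']; group

lemma hYi3 : YY⁻¹ * YY⁻¹ * YY⁻¹ = YY := by
  have h4 : YY * YY * YY * YY = 1 := by
    have := hY4; rwa [pow_succ, pow_succ, pow_two] at this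
  calc YY⁻¹ * YY⁻¹ * YY⁻¹ = YY⁻¹ * YY⁻¹ * YY⁻¹ * (YY * YY * YY * YY) := by
        rw [h4, mul_one]
    _ = YY := by group

lemma hZi2 : ZZ⁻¹ * ZZ⁻¹ = ZZ * ZZ := by
  have h4 : ZZ * ZZ * ZZ * ZZ = 1 := by
    have := hZ4; rwa [pow_succ, pow_succ, pow_two] at this
  calc ZZ⁻¹ * ZZ⁻¹ = ZZ⁻¹ * ZZ⁻¹ * (ZZ * ZZ * ZZ * ZZ) := by rw [h4, mul_one]
    _ = ZZ * ZZ := by group; exact pow_two ZZ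

lemma hYt'Y : YY * tP' * YY⁻¹ = tP⁻¹ := by
  have h : YY * ZZ = ZZ⁻¹ * YY⁻¹ := by rw [← hYZY]; group
  have h4 : YY⁻¹ ^ 4 = 1 := by rw [inv_pow, hY4, inv_one]
  calc YY * tP' * YY⁻¹ = YY * (YY * ZZ) * (YY⁻¹ * YY⁻¹ * YY⁻¹) := by rw [tP']; group
    _ = YY * (ZZ⁻¹ * YY⁻¹) * (YY⁻¹ * YY⁻¹ * YY⁻¹) := by rw [h]
    _ = YY * ZZ⁻¹ * (YY⁻¹ ^ 4) := by group
    _ = YY * ZZ⁻¹ := by rw [h4, mul_one]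
    _ = tP⁻¹ := by rw [tP]; group

lemma commute_tP : Commute tP tP' := by
  have hZsub : YY⁻¹ * ZZ⁻¹ * YY⁻¹ = ZZ := by
    rw [← hYZY]; group
  show tP * tP' = tP' * tP
  have lhs : tP * tP' = ZZ * ZZ * (YY⁻¹ * YY⁻¹) := by rw [tP, tP']; group
  have rhs : tP' * tP = ZZ * ZZ * (YY⁻¹ * YY⁻¹) := by
    calc tP' * tP = YY * ZZ * YY⁻¹ * YY⁻¹ * ZZ * YY⁻¹ := by rw [tP, tP']; group
      _ = YY * ZZ * YY⁻¹ * YY⁻¹ * (YY⁻¹ * ZZ⁻¹ * YY⁻¹) * YY⁻¹ := by rw [hZsub]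
      _ = YY * ZZ * (YY⁻¹ * YY⁻¹ * YY⁻¹) * ZZ⁻¹ * (YY⁻¹ * YY⁻¹) := by group
      _ = YY * ZZ * YY * ZZ⁻¹ * (YY⁻¹ * YY⁻¹) := by rw [hYi3]
      _ = (YY * ZZ * YY) * ZZ⁻¹ * (YY⁻¹ * YY⁻¹) := by group
      _ = ZZ⁻¹ * ZZ⁻¹ * (YY⁻¹ * YY⁻¹) := by rw [hYZY]
      _ = ZZ * ZZ * (YY⁻¹ * YY⁻¹) := by rw [hZi2]
  rw [lhs, rhs]


def gN : NN →* PP where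
  toFun n := tP ^ (toAdd n).1 * tP' ^ (toAdd n).2
  map_one' := by simp
  map_mul' a b := by
    have hc : ∀ (m k : ℤ), Commute (tP ^ m) (tP' ^ k) := fun m k => commute_tP.zpow_zpow m k
    show tP ^ (toAdd a + toAdd b).1 * tP' ^ (toAdd a + toAdd b).2 = _
    calc tP ^ (toAdd a + toAdd b).1 * tP' ^ (toAdd a + toAdd b).2
        = tP ^ (toAdd a).1 * (tP ^ (toAdd b).1 * tP' ^ (toAdd a).2) * tP' ^ (toAdd b).2 := by
          rw [Prod.fst_add, Prod.snd_add, zpow_add, zpow_add]; group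
      _ = tP ^ (toAdd a).1 * (tP' ^ (toAdd a).2 * tP ^ (toAdd b).1) * tP' ^ (toAdd b).2 := by
          rw [(hc (toAdd b).1 (toAdd a).2).eq]
      _ = (tP ^ (toAdd a).1 * tP' ^ (toAdd a).2) * (tP ^ (toAdd b).1 * tP' ^ (toAdd b).2) := by
          group

lemma gN_apply (p : ℤ × ℤ) : gN (ofAdd p) = tP ^ p.1 * tP' ^ p.2 := rfl

def gG : Multiplicative (ZMod 4) →* PP := zmod4Hom YY hY4

lemma key1 : ∀ n : NN, gN (rot n) = YY * gN n * YY⁻¹ := by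
  intro n
  rcases n with ⟨a, b⟩
  have h1 : gN (rot (ofAdd (a, b))) = tP ^ (-b) * tP' ^ a := by rw [rot_apply, gN_apply]
  have h2 : YY * (tP ^ a * tP' ^ b) * YY⁻¹
      = (YY * tP * YY⁻¹) ^ a * (YY * tP' * YY⁻¹) ^ b := by
    rw [conj_zpow, conj_zpow]; group
  show gN (rot (ofAdd (a,b))) = YY * gN (ofAdd (a,b)) * YY⁻¹
  rw [h1, gN_apply, h2, hYtY, hYt'Y, ← zpow_neg_one, ← zpow_mul]
  rw [neg_one_mul]
  exact (commute_tP.zpow_zpow (-b) a).eq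

lemma compat : ∀ σ : Multiplicative (ZMod 4),
    gN.comp ((phiA σ) : NN →* NN) = ((MulAut.conj (gG σ)) : PP →* PP).comp gN := by
  have main : ∀ m : ℕ, ∀ n : NN,
      gN (phiA (ofAdd ((m : ℤ) : ZMod 4)) n) = YY ^ (m:ℤ) * gN n * (YY ^ (m:ℤ))⁻¹ := by
    intro m
    induction m with
    | zero => intro n; simp [phiA]
      -- phiA 0 = 1
    | succ k ih =>
      intro n
      have hcast : (((k+1 : ℕ) : ℤ) : ZMod 4) = ((k:ℤ) : ZMod 4) + ((1:ℤ) : ZMod 4) := by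
        push_cast; ring
      have hsplit : (ofAdd (((k+1:ℕ):ℤ) : ZMod 4)) =
          ofAdd (((k:ℤ)) : ZMod 4) * ofAdd (((1:ℤ)) : ZMod 4) := by
        rw [← ofAdd_add, hcast]
      have h1 : phiA (ofAdd (((1:ℤ)) : ZMod 4)) = rot := by
        rw [phiA, zmod4Hom_intCast]; simp
      rw [hsplit, map_mul]
      show gN ((phiA (ofAdd (((k:ℤ)) : ZMod 4))) ((phiA (ofAdd (((1:ℤ)) : ZMod 4))) n)) = _
      rw [h1, ih (rot n), key1 n]
      have : ((k+1:ℕ):ℤ) = (k:ℤ) + 1 := by push_cast; ring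
      rw [this, zpow_add, zpow_one]
      group
  intro σ
  ext n
  show gN ((phiA σ) n) = (gG σ) * gN n * (gG σ)⁻¹
  have hval : ((((toAdd σ).val : ℕ) : ℤ) : ZMod 4) = toAdd σ := by
    push_cast
    rw [ZMod.natCast_val, ZMod.cast_id]
  have hσ : σ = ofAdd ((((toAdd σ).val : ℕ) : ℤ) : ZMod 4) := by
    rw [hval, ofAdd_toAdd]
  rw [hσ, main ((toAdd σ).val) n, gG, zmod4Hom_intCast]

def gH : HH →* PP := SemidirectProduct.lift gN gG compat


def rg (k : ℤ) : Multiplicative (ZMod 4) := ofAdd ((k : ℤ) : ZMod 4)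

lemma phiA_rg (k : ℤ) : phiA (rg k) = rot ^ k := by rw [rg, phiA, zmod4Hom_intCast]

lemma rg_add (k l : ℤ) : rg k * rg l = rg (k + l) := by
  rw [rg, rg, rg, ← ofAdd_add]
  push_cast
  rfl

lemma mulH (u v : NN) (s t : Multiplicative (ZMod 4)) :
    (⟨u, s⟩ : HH) * ⟨v, t⟩ = ⟨u * phiA s v, s * t⟩ := rfl

lemma phiA1_apply (p : ℤ × ℤ) : phiA (rg 1) (ofAdd p) = ofAdd (-p.2, p.1) := by
  rw [phiA_rg, zpow_one, rot_apply]

lemma phiA2_apply (p : ℤ × ℤ) : phiA (rg 2) (ofAdd p) = ofAdd (-p.1, -p.2) := by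
  rw [show rg 2 = rg 1 * rg 1 by rw [rg_add]; norm_num, map_mul]
  show phiA (rg 1) (phiA (rg 1) (ofAdd p)) = _
  rw [phiA1_apply, phiA1_apply]

lemma phiA3_apply (p : ℤ × ℤ) : phiA (rg 3) (ofAdd p) = ofAdd (p.2, -p.1) := by
  rw [show rg 3 = rg 1 * rg 2 by rw [rg_add]; norm_num, map_mul]
  show phiA (rg 1) (phiA (rg 2) (ofAdd p)) = _
  rw [phiA2_apply, phiA1_apply]
  norm_num

lemma rg_one_eq_one : rg 0 = 1 := by
  rw [rg]; norm_num

def xIm : HH := ⟨ofAdd ((0:ℤ),(1:ℤ)), rg 2⟩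
def yIm : HH := ⟨1, rg 1⟩
def zIm : HH := ⟨ofAdd ((1:ℤ),(0:ℤ)), rg 1⟩

lemma rg_four : rg 4 = 1 := by
  rw [rg]
  norm_num
  rfl

lemma xIm_sq : xIm * xIm = 1 := by
  ext <;>
  simp [xIm, rg_add, rg_four, phiA1_apply, phiA2_apply, phiA3_apply, ← ofAdd_add,
    Prod.mk_add_mk, SemidirectProduct.mul_left, SemidirectProduct.mul_right]

lemma yIm_four : yIm * yIm * yIm * yIm = 1 := by
  ext <;>
  simp [yIm, rg_add, rg_four, phiA1_apply, phiA2_apply, phiA3_apply, ← ofAdd_add,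
    Prod.mk_add_mk, SemidirectProduct.mul_left, SemidirectProduct.mul_right]

lemma zIm_four : zIm * zIm * zIm * zIm = 1 := by
  have key : ((1,0) : ℤ × ℤ) + (0,1) + (-1,0) + (0,-1) = 0 := by decide
  ext <;>
  simp [zIm, rg_add, rg_four, phiA1_apply, phiA2_apply, phiA3_apply, ← ofAdd_add,
    Prod.mk_add_mk, SemidirectProduct.mul_left, SemidirectProduct.mul_right] <;>
  exact_mod_cast key

lemma xyzIm : xIm * yIm * zIm = 1 := by
  ext <;>
  simp [xIm, yIm, zIm, rg_add, rg_four, phiA1_apply, phiA2_apply, phiA3_apply, ← ofAdd_add,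
    Prod.mk_add_mk, SemidirectProduct.mul_left, SemidirectProduct.mul_right]


def fImg : Fin 3 → HH := ![xIm, yIm, zIm]

lemma relsHold : ∀ r ∈ vonDyckRels 2 4 4, (FreeGroup.lift fImg) r = 1 := by
  rintro r (rfl | rfl | rfl | rfl)
  · rw [map_pow, FreeGroup.lift_apply_of]
    show (fImg 0) ^ 2 = 1
    rw [pow_two]
    exact xIm_sq
  · rw [map_pow, FreeGroup.lift_apply_of]
    show (fImg 1) ^ 4 = 1
    rw [pow_succ, pow_succ, pow_two]
    exact yIm_four
  · rw [map_pow, FreeGroup.lift_apply_of]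
    show (fImg 2) ^ 4 = 1
    rw [pow_succ, pow_succ, pow_two]
    exact zIm_four
  · rw [map_mul, map_mul, FreeGroup.lift_apply_of, FreeGroup.lift_apply_of, FreeGroup.lift_apply_of]
    exact xyzIm

def fH : PP →* HH := PresentedGroup.toGroup relsHold

lemma fH_X : fH XX = xIm := PresentedGroup.toGroup.of relsHold
lemma fH_Y : fH YY = yIm := PresentedGroup.toGroup.of relsHold
lemma fH_Z : fH ZZ = zIm := PresentedGroup.toGroup.of relsHold

lemma gH_mk (n : NN) (σ : Multiplicative (ZMod 4)) :
    gH ⟨n, σ⟩ = gN n * gG σ := rfl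

lemma gG_rg (k : ℤ) : gG (rg k) = YY ^ k := by rw [gG, rg, zmod4Hom_intCast]

lemma gf_id : gH.comp fH = MonoidHom.id PP := by
  apply PresentedGroup.ext
  intro x
  fin_cases x
  · show gH (fH XX) = XX
    rw [fH_X, xIm, gH_mk, gG_rg, gN_apply]
    rw [hX_eq, tP, tP']
    norm_num
    group
  · show gH (fH YY) = YY
    rw [fH_Y, yIm, gH_mk, gG_rg, map_one, one_mul, zpow_one]
  · show gH (fH ZZ) = ZZ
    rw [fH_Z, zIm, gH_mk, gG_rg, gN_apply, tP]
    norm_num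

lemma NN_decomp (n : NN) :
    n = (ofAdd ((1:ℤ),(0:ℤ))) ^ (toAdd n).1 * (ofAdd ((0:ℤ),(1:ℤ))) ^ (toAdd n).2 := by
  rcases n with ⟨a, b⟩
  show ofAdd (a, b) = _
  rw [← ofAdd_zsmul, ← ofAdd_zsmul, ← ofAdd_add]
  congr 1
  show _ = (toAdd (a,b)).1 • ((1:ℤ),(0:ℤ)) + (toAdd (a,b)).2 • ((0:ℤ),(1:ℤ))
  show (a, b) = a • ((1:ℤ),(0:ℤ)) + b • ((0:ℤ),(1:ℤ))
  simp [Prod.ext_iff]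

lemma fH_tP : fH tP = SemidirectProduct.inl (ofAdd ((1:ℤ),(0:ℤ))) := by
  rw [tP, map_mul, map_inv, fH_Y, fH_Z, zIm, yIm]
  ext : 1
  · show toAdd (ofAdd ((1:ℤ),(0:ℤ)) * phiA (rg 1) ((phiA (rg 1)⁻¹) (1:NN))⁻¹) = _
    simp
    rfl
  · show rg 1 * (rg 1)⁻¹ = 1
    simp

lemma fH_tP' : fH tP' = SemidirectProduct.inl (ofAdd ((0:ℤ),(1:ℤ))) := by
  have h : tP' = YY * tP * YY⁻¹ := hYtY.symm
  rw [h, map_mul, map_mul, map_inv, fH_Y, fH_tP]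
  have hy : yIm = SemidirectProduct.inr (rg 1) := by ext <;> rfl
  rw [hy, ← map_inv, ← SemidirectProduct.inl_aut]
  congr 1

lemma rg_zpow (k : ℤ) : rg 1 ^ k = rg k := by
  rw [rg, rg, ← ofAdd_zsmul]
  congr 1
  have h1 : ((1:ℤ) : ZMod 4) = 1 := by norm_num
  rw [h1, zsmul_one]

lemma fg_id : fH.comp gH = MonoidHom.id HH := by
  apply SemidirectProduct.hom_ext
  · refine MonoidHom.ext fun n => ?_
    show fH (gH (SemidirectProduct.inl n)) = SemidirectProduct.inl n
    have h1 : gH (SemidirectProduct.inl n) = gN n := SemidirectProduct.lift_inl _ _ _ n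
    rw [h1]
    conv_rhs => rw [NN_decomp n]
    show fH (tP ^ (toAdd n).1 * tP' ^ (toAdd n).2) = _
    rw [map_mul, map_zpow, map_zpow, fH_tP, fH_tP', map_mul, map_zpow, map_zpow]
  · refine MonoidHom.ext fun σ => ?_
    show fH (gH (SemidirectProduct.inr σ)) = SemidirectProduct.inr σ
    have h1 : gH (SemidirectProduct.inr σ) = gG σ := SemidirectProduct.lift_inr _ _ _ σ
    rw [h1]
    have hval : ((((toAdd σ).val : ℕ) : ℤ) : ZMod 4) = toAdd σ := by
      push_cast
      rw [ZMod.natCast_val, ZMod.cast_id]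
    have hσ : σ = rg (((toAdd σ).val : ℕ) : ℤ) := by
      rw [rg, hval, ofAdd_toAdd]
    rw [hσ, gG_rg, map_zpow, fH_Y]
    have hy : yIm = SemidirectProduct.inr (rg 1) := by ext <;> rfl
    rw [hy, ← map_zpow]
    congr 1
    rw [rg_zpow, ← hσ]

def theEquiv : PP ≃* HH := MonoidHom.toMulEquiv fH gH gf_id fg_id

lemma transfer {G K : Type*} [Group G] [Group K] (e : G ≃* K) (hG : HasPropertyA G) :
    HasPropertyA K := by
  intro φ hφ
  set ψ : G ≃* G := (e.trans φ).trans e.symm with hψ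
  have hψc : ∀ g : G, IsConj g (ψ g) := by
    intro g
    have := hφ (e g)
    have h2 := (e.symm : K →* G).map_isConj this
    simpa [hψ] using h2
  obtain ⟨h, hh⟩ := hG ψ hψc
  refine ⟨e h, ?_⟩
  intro k
  have := hh (e.symm k)
  have h3 := congrArg e this
  simp only [map_mul, map_inv] at h3
  simpa [hψ] using h3

theorem final : HasPropertyA PP := transfer theEquiv.symm hasPropertyA_HH

end VD

theorem vonDyck_244_propertyA : HasPropertyA (PresentedGroup (vonDyckRels 2 4 4)) := by
  exact final
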